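/- Let (p, ξ) be a contact element and let x ∈ S^n with x ≠ p. Then there exists a unique r ∈ (0, π) such that cos r = x · (cos r p + sin r ξ). That is, x lies on precisely one unoriented sphere of the parabolic pencil of unoriented spheres determined by (p, ξ). -/

import Mathlib

open scoped RealInnerProductSpace

/-- Let `(p, ξ)` be a contact element of `Sⁿ` and let `x ∈ Sⁿ` with `x ≠ p`.  Then there is a
unique `r ∈ (0, π)` with `cos r = x · (cos r p + sin r ξ)`: the point `x` lies on precisely
one unoriented sphere of the parabolic pencil of unoriented spheres determined by `(p, ξ)`. -/
theorem exists_unique_pencil_radius (n : ℕ)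
    (p ξ : EuclideanSpace ℝ (Fin (n + 1))) (hp : ‖p‖ = 1) (hξ : ‖ξ‖ = 1)
    (hpξ : ⟪p, ξ⟫ = 0) (x : EuclideanSpace ℝ (Fin (n + 1))) (hx : ‖x‖ = 1) (hxp : x ≠ p) :
    ∃! r : ℝ, r ∈ Set.Ioo 0 Real.pi ∧
      Real.cos r = ⟪x, Real.cos r • p + Real.sin r • ξ⟫ := by
  set a := ⟪x, p⟫ with ha_def
  set b := ⟪x, ξ⟫ with hb_def
  have ha : a < 1 := (inner_lt_one_iff_real_of_norm_eq_one hx hp).mpr hxp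
  have h1a : (0:ℝ) < 1 - a := by linarith
  set t := b / (1 - a) with ht_def
  have key : ∀ r : ℝ,
      (Real.cos r = ⟪x, Real.cos r • p + Real.sin r • ξ⟫ ↔
        Real.cos r * (1 - a) = Real.sin r * b) := by
    intro r
    rw [inner_add_right, real_inner_smul_right, real_inner_smul_right, ← ha_def, ← hb_def]
    constructor <;> intro h <;> linarith [h]
  have hmem : Real.arctan t ∈ Set.Ioo (-(Real.pi/2)) (Real.pi/2) := Real.arctan_mem_Ioo t
  refine ⟨Real.pi/2 - Real.arctan t, ⟨⟨by linarith [hmem.2], by linarith [hmem.1]⟩, ?_⟩, ?_⟩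
  · rw [key]
    rw [Real.cos_pi_div_two_sub, Real.sin_pi_div_two_sub, Real.sin_arctan, Real.cos_arctan]
    have hs : (0:ℝ) < Real.sqrt (1 + t ^ 2) := Real.sqrt_pos.mpr (by positivity)
    field_simp [ht_def]
    linarith [show t * (1 - a) = b from by rw [ht_def]; exact div_mul_cancel₀ b h1a.ne']
  · rintro r ⟨⟨hr0, hrπ⟩, hr⟩
    rw [key] at hr
    have hsin : 0 < Real.sin r := Real.sin_pos_of_pos_of_lt_pi hr0 hrπ
    have htan : Real.tan (Real.pi/2 - r) = t := by
      rw [Real.tan_eq_sin_div_cos, Real.sin_pi_div_two_sub, Real.cos_pi_div_two_sub]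
      rw [div_eq_div_iff hsin.ne' h1a.ne'] at *
      · linarith [hr]
    have := Real.arctan_tan (x := Real.pi/2 - r) (by linarith) (by linarith)
    rw [htan] at this
    linarith
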